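/- Let c ∈ F_q^n be nonzero with b-shape (N_0, N_1, ..., N_{l+1}), with n_i = |N_i| and t = n_0 + n_{l+1}. If t ≥ b-1 and l = 1, then wt_b(c) = n - (t + 1 - b). -/

import Mathlib

/-- The cyclic `b`-weight of `x : ZMod n → F`. -/
noncomputable def wtb {F : Type*} [Zero F] {n : ℕ} (b : ℕ) (x : ZMod n → F) : ℕ :=
  Nat.card {i : ZMod n // ∃ j < b, x (i + (j : ZMod n)) ≠ 0}

/-- Partial sums of block sizes: `blockSum nsize i = n_0 + ⋯ + n_{i-1}`. -/
def blockSum (nsize : ℕ → ℕ) (i : ℕ) : ℕ := ∑ j ∈ Finset.range i, nsize j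

/-- `c` has `b`-shape `(N_0, N_1, …, N_{l+1})`, where block `N_i` consists of the
(0-indexed) positions `[S i, S (i+1))` with `S = blockSum nsize`:
* the block sizes sum to `n`, and the internal blocks are nonempty;
* all coordinates of `c` in the leading block `N_0` and the trailing block
  `N_{l+1}` are zero;
* each odd-indexed block `N_i` (`1 ≤ i ≤ l`) starts and ends with a nonzero
  coordinate and its non-cyclic `(b-1)`-weight equals its length `n_i`, i.e.
  every position in the block has a nonzero coordinate within its window of
  length `b-1` truncated at the end of the block;
* each even-indexed block `N_i` (`1 ≤ i ≤ l`) is a zero run of length `≥ b-1`. -/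
def HasBShape {F : Type*} [Zero F] {n : ℕ} (b l : ℕ) (nsize : ℕ → ℕ)
    (c : ZMod n → F) : Prop :=
  blockSum nsize (l + 2) = n ∧
  (∀ i, 1 ≤ i → i ≤ l → 1 ≤ nsize i) ∧
  (∀ p, p < nsize 0 → c (p : ZMod n) = 0) ∧
  (∀ p, blockSum nsize (l + 1) ≤ p → p < n → c (p : ZMod n) = 0) ∧
  (∀ i, 1 ≤ i → i ≤ l → Odd i →
    c ((blockSum nsize i : ℕ) : ZMod n) ≠ 0 ∧
    c ((blockSum nsize (i + 1) - 1 : ℕ) : ZMod n) ≠ 0 ∧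
    (∀ p, blockSum nsize i ≤ p → p < blockSum nsize (i + 1) →
      ∃ j < b - 1, p + j < blockSum nsize (i + 1) ∧ c ((p + j : ℕ) : ZMod n) ≠ 0)) ∧
  (∀ i, 1 ≤ i → i ≤ l → Even i →
    b - 1 ≤ nsize i ∧
    ∀ p, blockSum nsize i ≤ p → p < blockSum nsize (i + 1) → c ((p : ℕ) : ZMod n) = 0)

/-- If `t = n_0 + n_{l+1} ≥ b - 1` and `l = 1`, then `wt_b(c) = n - (t + 1 - b)`. -/
theorem wtb_of_bshape_case3
    {F : Type*} [Field F] {n : ℕ} [NeZero n] (b l : ℕ) (hb : 2 ≤ b)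
    (nsize : ℕ → ℕ) (c : ZMod n → F) (hc : c ≠ 0)
    (hshape : HasBShape b l nsize c)
    (hl : l = 1) (ht : b - 1 ≤ nsize 0 + nsize (l + 1)) :
    wtb b c = n - (nsize 0 + nsize (l + 1) + 1 - b) := by
  classical
  subst hl
  obtain ⟨hsum, hpos, hlead, htrail, hodd, _⟩ := hshape
  have hB1 : blockSum nsize 1 = nsize 0 := by simp [blockSum]
  have hB2 : blockSum nsize 2 = nsize 0 + nsize 1 := by
    simp [blockSum, Finset.sum_range_succ]
  have hB3 : blockSum nsize 3 = nsize 0 + nsize 1 + nsize 2 := by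
    simp [blockSum, Finset.sum_range_succ]
  set a0 := nsize 0 with ha0
  set a1 := nsize 1 with ha1
  have ha2 : nsize (1 + 1) = nsize 2 := rfl
  rw [ha2] at ht ⊢
  set a2 := nsize 2 with ha2'
  rw [hB3] at hsum
  have hn : a0 + a1 + a2 = n := hsum
  have ha1pos : 1 ≤ a1 := hpos 1 le_rfl le_rfl
  obtain ⟨hstart, -, hwin⟩ := hodd 1 le_rfl le_rfl ⟨0, by ring⟩
  rw [hB1] at hstart
  rw [hB1, hB2] at hwin
  rw [show (1:ℕ) + 1 = 2 from rfl, hB2] at htrail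
  set T := a0 + a2 + 1 - b with hTdef
  have hTle : T < n := by omega
  -- zero region: positions in [a0+a1, n+a0) (mod n) are zero
  have hzero : ∀ p : ℕ, a0 + a1 ≤ p → p < n + a0 → c ((p : ℕ) : ZMod n) = 0 := by
    intro p hp1 hp2
    by_cases hpn : p < n
    · exact htrail p hp1 hpn
    · have hq : p = n + (p - n) := by omega
      rw [hq]
      push_cast
      rw [ZMod.natCast_self, zero_add]
      exact hlead (p - n) (by omega)
  set f : ℕ → ZMod n := fun k => ((a0 + a1 + k : ℕ) : ZMod n) with hf
  set P : ZMod n → Prop := fun i => ∃ j < b, c (i + (j : ZMod n)) ≠ 0 with hPdef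
  have hbad : ∀ k, k < T → ¬ P (f k) := by
    rintro k hk ⟨j, hj, hne⟩
    apply hne
    have : f k + (j : ZMod n) = ((a0 + a1 + k + j : ℕ) : ZMod n) := by
      simp only [hf]; push_cast; ring
    rw [this]
    exact hzero _ (by omega) (by omega)
  have hgood : ∀ i : ZMod n, ¬ (∃ k < T, f k = i) → P i := by
    intro i hne
    set m := i.val with hm
    have hmn : m < n := ZMod.val_lt i
    have him : ((m : ℕ) : ZMod n) = i := by
      simp [hm, ZMod.natCast_val, ZMod.cast_id]
    rcases lt_or_ge m a0 with hcase | hcase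
    · rcases le_or_gt a0 (m + (b - 1)) with hc2 | hc2
      · refine ⟨a0 - m, by omega, ?_⟩
        have : i + ((a0 - m : ℕ) : ZMod n) = ((m + (a0 - m) : ℕ) : ZMod n) := by
          rw [← him]; push_cast; ring
        rw [this, show m + (a0 - m) = a0 by omega]
        exact hstart
      · exfalso
        refine hne ⟨m + a2, by omega, ?_⟩
        have h1 : a0 + a1 + (m + a2) = n + m := by omega
        simp only [hf, h1]
        push_cast
        rw [ZMod.natCast_self, zero_add]
        exact him
    · rcases lt_or_ge m (a0 + a1) with hcase2 | hcase2
      · obtain ⟨j, hj, hj2, hjne⟩ := hwin m hcase hcase2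
        refine ⟨j, by omega, ?_⟩
        have : i + ((j : ℕ) : ZMod n) = ((m + j : ℕ) : ZMod n) := by
          rw [← him]; push_cast; ring
        rw [this]
        exact hjne
      · rcases lt_or_ge m (a0 + a1 + T) with hcase3 | hcase3
        · exfalso
          refine hne ⟨m - (a0 + a1), by omega, ?_⟩
          simp only [hf, show a0 + a1 + (m - (a0 + a1)) = m by omega]
          exact him
        · refine ⟨n + a0 - m, by omega, ?_⟩
          have : i + ((n + a0 - m : ℕ) : ZMod n) = ((m + (n + a0 - m) : ℕ) : ZMod n) := by
            rw [← him]; push_cast; ring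
          rw [this, show m + (n + a0 - m) = n + a0 by omega]
          push_cast
          rw [ZMod.natCast_self, zero_add]
          exact hstart
  have hcompl : Finset.univ.filter (fun i => ¬ P i) = (Finset.range T).image f := by
    ext i
    simp only [Finset.mem_filter, Finset.mem_univ, true_and, Finset.mem_image,
      Finset.mem_range]
    constructor
    · intro h
      by_contra h2
      push_neg at h2
      exact h (hgood i (by rintro ⟨k, hk, hfk⟩; exact h2 k hk hfk))
    · rintro ⟨k, hk, rfl⟩
      exact hbad k hk
  have hinj : Set.InjOn f (Finset.range T) := by
    intro k1 hk1 k2 hk2 hfe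
    simp only [Finset.coe_range, Set.mem_Iio] at hk1 hk2
    have h1 := (ZMod.natCast_eq_natCast_iff _ _ _).mp hfe
    have h2 : k1 ≡ k2 [MOD n] := Nat.ModEq.add_left_cancel' (a0 + a1) h1
    have h3 : k1 % n = k2 % n := h2
    rw [Nat.mod_eq_of_lt (by omega), Nat.mod_eq_of_lt (by omega)] at h3
    exact h3
  have hcardim : ((Finset.range T).image f).card = T := by
    rw [Finset.card_image_of_injOn hinj, Finset.card_range]
  have hw : wtb b c = (Finset.univ.filter P).card := by
    rw [wtb, Nat.card_eq_fintype_card, Fintype.card_subtype]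
  have hsplit := Finset.card_filter_add_card_filter_not (s := Finset.univ) (p := P)
  rw [hcompl, hcardim, Finset.card_univ, ZMod.card] at hsplit
  rw [hw]
  omega
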